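/- Under the setup above (P row stochastic, α ∈ (0,1), K ⊆ {1,…,n}, U indicator of the complement of K, P̃(i,j) = U(i)P(i,j), U(s) = 1, π̃_s = α·e_sᵀ(I − (1−α)(P̃ + e_K e_sᵀ))⁻¹), one has π̃_s(s) ≥ α + (1−α)·π̃_s(K), where π̃_s(K) = ∑_{k∈K} π̃_s(k). -/

import Mathlib

open Matrix

attribute [local instance] Matrix.linftyOpNormedRing Matrix.linftyOpNormedAlgebra

/-- π̃_s(s) ≥ α + (1−α) π̃_s(K). -/
theorem stmt7 {n : ℕ} (P : Matrix (Fin n) (Fin n) ℝ)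
    (hP0 : ∀ i j, 0 ≤ P i j) (hP1 : ∀ i, ∑ j, P i j = 1)
    (α : ℝ) (hα0 : 0 < α) (hα1 : α < 1)
    (K : Finset (Fin n)) (s : Fin n) (hs : s ∉ K)
    (U : Fin n → ℝ) (hUdef : ∀ i, U i = if i ∈ K then 0 else 1)
    (Pt : Matrix (Fin n) (Fin n) ℝ) (hPt : Pt = Matrix.of fun i j => U i * P i j)
    (eK : Fin n → ℝ) (heK : eK = fun i => if i ∈ K then 1 else 0)
    (πt : Fin n → ℝ)
    (hπt : πt = α • ((Pi.single s 1 : Fin n → ℝ) ᵥ*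
      (1 - (1 - α) • (Pt + vecMulVec eK (Pi.single s 1)))⁻¹)) :
    πt s ≥ α + (1 - α) * ∑ k ∈ K, πt k := by
  classical
  set e : Fin n → ℝ := Pi.single s 1 with he
  set M : Matrix (Fin n) (Fin n) ℝ := Pt + vecMulVec eK e with hMdef
  set B : Matrix (Fin n) (Fin n) ℝ := (1 - α) • M with hBdef
  have hc0 : (0:ℝ) ≤ 1 - α := by linarith
  have he0 : ∀ j, 0 ≤ e j := by
    intro j
    rw [he, Pi.single_apply]
    split <;> norm_num
  have hU0 : ∀ i, 0 ≤ U i := by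
    intro i; rw [hUdef]; split <;> norm_num
  have heK0 : ∀ i, 0 ≤ eK i := by
    intro i; simp only [heK]; split <;> norm_num
  have hM0 : ∀ i j, 0 ≤ M i j := by
    intro i j
    rw [hMdef]
    simp only [Matrix.add_apply, vecMulVec_apply, hPt, Matrix.of_apply]
    exact add_nonneg (mul_nonneg (hU0 i) (hP0 i j)) (mul_nonneg (heK0 i) (he0 j))
  have hMrow : ∀ i, ∑ j, M i j = 1 := by
    intro i
    rw [hMdef]
    simp only [Matrix.add_apply, vecMulVec_apply, hPt, Matrix.of_apply]
    rw [Finset.sum_add_distrib, ← Finset.mul_sum, ← Finset.mul_sum, hP1 i]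
    have : ∑ j, e j = 1 := by
      rw [he]
      simp [Finset.sum_pi_single]
    rw [this, mul_one, mul_one]
    simp only [hUdef, heK]
    split <;> norm_num
  have hnormM : ‖M‖ ≤ 1 := by
    rw [Matrix.linfty_opNorm_def]
    have h1 : (Finset.univ.sup fun i => ∑ j, ‖M i j‖₊) ≤ (1 : NNReal) := by
      refine Finset.sup_le fun i _ => ?_
      rw [← NNReal.coe_le_coe]
      push_cast
      have : ∀ j, ‖M i j‖ = M i j := fun j => Real.norm_of_nonneg (hM0 i j)
      simp only [this]
      rw [hMrow i]
    exact_mod_cast h1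
  have hBnorm : ‖B‖ < 1 := by
    rw [hBdef]
    calc ‖(1 - α) • M‖ = ‖(1-α)‖ * ‖M‖ := norm_smul _ _
    _ ≤ (1 - α) * 1 := by
        apply mul_le_mul _ hnormM (norm_nonneg _) hc0
        rw [Real.norm_of_nonneg hc0]
    _ < 1 := by linarith
  have hsummable : Summable fun i : ℕ => B ^ i := summable_geometric_of_norm_lt_one hBnorm
  have hinv : (1 - B)⁻¹ = ∑' i : ℕ, B ^ i := by
    rw [Matrix.nonsing_inv_eq_ringInverse, ← geom_series_eq_inverse _ hBnorm]; rfl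
  have hunit : IsUnit (1 - B) := isUnit_one_sub_of_norm_lt_one hBnorm
  have hpow0 : ∀ (i : ℕ) (a b : Fin n), 0 ≤ (B ^ i) a b := by
    intro i
    induction i with
    | zero =>
      intro a b
      rw [pow_zero, Matrix.one_apply]
      split <;> norm_num
    | succ i ih =>
      intro a b
      rw [pow_succ, Matrix.mul_apply]
      refine Finset.sum_nonneg fun j _ => mul_nonneg (ih a j) ?_
      rw [hBdef, Matrix.smul_apply, smul_eq_mul]
      exact mul_nonneg hc0 (hM0 j b)
  have hπt' : πt = α • ((1 - B)⁻¹ s) := by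
    rw [hπt, he, single_one_vecMul]; rfl
  have hπ0 : ∀ j, 0 ≤ πt j := by
    intro j
    rw [hπt']
    simp only [Pi.smul_apply, smul_eq_mul]
    refine mul_nonneg hα0.le ?_
    rw [hinv]
    erw [tsum_apply hsummable, tsum_apply (Pi.summable.mp hsummable s)]
    exact tsum_nonneg fun i => hpow0 i s j
  have hkey : πt ᵥ* (1 - B) = α • e := by
    rw [hπt', he]
    have h1 : IsUnit (1 - B).det := (Matrix.isUnit_iff_isUnit_det _).mp hunit
    have h2 : (1 - B)⁻¹ s = Pi.single s (1:ℝ) ᵥ* (1 - B)⁻¹ := by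
      rw [single_one_vecMul]; rfl
    rw [h2, ← vecMul_smul, vecMul_vecMul, smul_mul_assoc, Matrix.nonsing_inv_mul _ h1, vecMul_smul, vecMul_one]
  have hkeys : πt s - (1 - α) * ∑ i, πt i * M i s = α := by
    have hveq := congrFun hkey s
    rw [vecMul_sub, vecMul_one] at hveq
    simp only [Pi.sub_apply, Pi.smul_apply, smul_eq_mul] at hveq
    rw [he, Pi.single_eq_same, mul_one] at hveq
    have h3 : (πt ᵥ* B) s = (1 - α) * ∑ i, πt i * M i s := by
      simp only [hBdef, Matrix.vecMul, dotProduct, Matrix.smul_apply, smul_eq_mul,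
        Finset.mul_sum]
      exact Finset.sum_congr rfl fun i _ => by ring
    rw [h3] at hveq
    exact hveq
  have hsum : ∑ i, πt i * M i s = (∑ i, πt i * Pt i s) + ∑ k ∈ K, πt k := by
    have hMis : ∀ i, M i s = Pt i s + eK i := by
      intro i
      rw [hMdef]
      simp only [Matrix.add_apply, vecMulVec_apply, he, Pi.single_eq_same, mul_one]
    simp only [hMis]
    calc ∑ i, πt i * (Pt i s + eK i)
        = ∑ i, (πt i * Pt i s + πt i * eK i) :=
          Finset.sum_congr rfl fun i _ => by ring
      _ = (∑ i, πt i * Pt i s) + ∑ i, πt i * eK i := Finset.sum_add_distrib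
      _ = (∑ i, πt i * Pt i s) + ∑ k ∈ K, πt k := by
          congr 1
          simp only [heK, mul_ite, mul_one, mul_zero]
          rw [Finset.sum_ite_mem, Finset.univ_inter]
  have hX : 0 ≤ ∑ i, πt i * Pt i s := by
    refine Finset.sum_nonneg fun i _ => mul_nonneg (hπ0 i) ?_
    rw [hPt]
    exact mul_nonneg (hU0 i) (hP0 i s)
  have hS : πt s = α + (1 - α) * ((∑ i, πt i * Pt i s) + ∑ k ∈ K, πt k) := by
    rw [← hsum]; linarith [hkeys]
  rw [hS]
  nlinarith [mul_nonneg hc0 hX]
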